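/- Let F₂ be the free group on two generators u and v, and let φ : F₂ → ℤ be the homomorphism sending u to 0 and v to 1. Then the kernel of φ is a free group, freely generated by the elements w_k = v^k u v^{-k} for k ∈ ℤ. -/

import Mathlib

/-- The free group on two generators `u`, `v`. -/
def u : FreeGroup (Fin 2) := FreeGroup.of 0
def v : FreeGroup (Fin 2) := FreeGroup.of 1

/-- The homomorphism `F₂ → ℤ` sending `u ↦ 0` and `v ↦ 1`. -/
def φ : FreeGroup (Fin 2) →* Multiplicative ℤ :=
  FreeGroup.lift fun i : Fin 2 =>
    if i = 0 then Multiplicative.ofAdd (0 : ℤ) else Multiplicative.ofAdd (1 : ℤ)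

/-- Shift action of `ℤ` on `FreeGroup ℤ`. -/
def A : Multiplicative ℤ →* MulAut (FreeGroup ℤ) :=
  MonoidHom.mk' (fun n => FreeGroup.freeGroupCongr (Equiv.addLeft n.toAdd))
    (by
      intro a b
      apply MulEquiv.toMonoidHom_injective
      apply FreeGroup.ext_hom
      intro k
      simp [add_assoc])

@[simp] lemma A_of (n : Multiplicative ℤ) (k : ℤ) :
    A n (FreeGroup.of k) = FreeGroup.of (n.toAdd + k) := by
  simp [A]

/-- The map `F₂ → FreeGroup ℤ ⋊ ℤ`. -/
def Φ : FreeGroup (Fin 2) →* SemidirectProduct (FreeGroup ℤ) (Multiplicative ℤ) A :=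
  FreeGroup.lift fun i : Fin 2 =>
    if i = 0 then SemidirectProduct.inl (FreeGroup.of (0 : ℤ))
    else SemidirectProduct.inr (Multiplicative.ofAdd (1 : ℤ))

@[simp] lemma Φ_u : Φ u = SemidirectProduct.inl (FreeGroup.of (0 : ℤ)) := by
  simp [Φ, u]

@[simp] lemma Φ_v : Φ v = SemidirectProduct.inr (Multiplicative.ofAdd (1 : ℤ)) := by
  simp [Φ, v]

lemma rightHom_Φ (x : FreeGroup (Fin 2)) : SemidirectProduct.rightHom (Φ x) = φ x := by
  have : (SemidirectProduct.rightHom.comp Φ :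
      FreeGroup (Fin 2) →* Multiplicative ℤ) = φ := by
    apply FreeGroup.ext_hom
    intro a
    fin_cases a <;> simp [Φ, φ]
  exact DFunLike.congr_fun this x

lemma right_Φ (x : FreeGroup (Fin 2)) : (Φ x).right = φ x := rightHom_Φ x

/-- The map `FreeGroup ℤ → F₂`, `k ↦ vᵏ u v⁻ᵏ`. -/
def θ : FreeGroup ℤ →* FreeGroup (Fin 2) :=
  FreeGroup.lift fun k : ℤ => v ^ k * u * v ^ (-k)

@[simp] lemma θ_of (k : ℤ) : θ (FreeGroup.of k) = v ^ k * u * v ^ (-k) :=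
  FreeGroup.lift_apply_of

@[simp] lemma φ_u : φ u = 1 := by simp [φ, u]
@[simp] lemma φ_v : φ v = Multiplicative.ofAdd (1 : ℤ) := by simp [φ, v]

lemma φ_v_zpow (k : ℤ) : φ (v ^ k) = Multiplicative.ofAdd k := by
  rw [map_zpow, φ_v, ← ofAdd_zsmul]
  simp

lemma hw (k : ℤ) : v ^ k * u * v ^ (-k) ∈ φ.ker := by
  rw [MonoidHom.mem_ker]
  simp [φ_v_zpow, ← ofAdd_add]

lemma θ_A (n : Multiplicative ℤ) (w : FreeGroup ℤ) :
    θ (A n w) = v ^ n.toAdd * θ w * v ^ (-n.toAdd) := by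
  have : (θ.comp (A n).toMonoidHom : FreeGroup ℤ →* FreeGroup (Fin 2)) =
      ((MulAut.conj (v ^ n.toAdd)).toMonoidHom.comp θ) := by
    apply FreeGroup.ext_hom
    intro k
    simp only [MonoidHom.comp_apply, MulEquiv.coe_toMonoidHom, A_of, θ_of,
      MulAut.conj_apply]
    rw [zpow_add]
    group
  have h := DFunLike.congr_fun this w
  simp only [MonoidHom.comp_apply, MulEquiv.coe_toMonoidHom, MulAut.conj_apply] at h
  rw [h, zpow_neg]

lemma key (x : FreeGroup (Fin 2)) :
    θ (Φ x).left * v ^ (φ x).toAdd = x := by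
  induction x using FreeGroup.induction_on with
  | C1 => simp
  | of i =>
      fin_cases i
      · show θ (Φ u).left * v ^ (φ u).toAdd = u
        simp
      · show θ (Φ v).left * v ^ (φ v).toAdd = v
        simp
  | inv_of i ih =>
      rw [map_inv, map_inv, SemidirectProduct.inv_left, θ_A, map_inv θ, right_Φ,
        toAdd_inv]
      conv_rhs => rw [← ih]
      group
  | mul x y ihx ihy =>
      rw [map_mul, map_mul, SemidirectProduct.mul_left, map_mul, θ_A, right_Φ,
        toAdd_mul]
      conv_rhs => rw [← ihx, ← ihy]
      group

lemma Φ_w (k : ℤ) : Φ (v ^ k * u * v ^ (-k)) = SemidirectProduct.inl (FreeGroup.of k) := by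
  rw [map_mul, map_mul, map_zpow, map_zpow, Φ_u, Φ_v,
    ← map_zpow SemidirectProduct.inr, ← map_zpow SemidirectProduct.inr,
    zpow_neg, ← SemidirectProduct.inl_aut, A_of, toAdd_zpow]
  simp

/-- Restriction of `x ↦ (Φ x).left` to the kernel of `φ`, as a homomorphism. -/
def ρ : φ.ker →* FreeGroup ℤ where
  toFun x := (Φ (x : FreeGroup (Fin 2))).left
  map_one' := by simp
  map_mul' x y := by
    have hr : (Φ (x : FreeGroup (Fin 2))).right = 1 := by
      rw [right_Φ]; exact x.2
    simp [SemidirectProduct.mul_left, hr]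

lemma θ_ρ (x : φ.ker) : θ (ρ x) = (x : FreeGroup (Fin 2)) := by
  have h := key (x : FreeGroup (Fin 2))
  have hk : φ (x : FreeGroup (Fin 2)) = 1 := x.2
  rw [hk] at h
  show θ (Φ (x : FreeGroup (Fin 2))).left = (x : FreeGroup (Fin 2))
  simpa using h

lemma ρ_wk (k : ℤ) : ρ ⟨v ^ k * u * v ^ (-k), hw k⟩ = FreeGroup.of k := by
  show (Φ (v ^ k * u * v ^ (-k))).left = FreeGroup.of k
  rw [Φ_w, SemidirectProduct.left_inl]

lemma θ_mem (w : FreeGroup ℤ) : θ w ∈ φ.ker := by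
  rw [MonoidHom.mem_ker]
  have : (φ.comp θ : FreeGroup ℤ →* Multiplicative ℤ) = 1 := by
    apply FreeGroup.ext_hom
    intro k
    simpa using hw k
  exact DFunLike.congr_fun this w

/-- `θ` corestricted to the kernel. -/
def θ' : FreeGroup ℤ →* φ.ker := θ.codRestrict φ.ker θ_mem

/-- The kernel of `φ` is freely generated by the elements `w_k = vᵏ u v⁻ᵏ`, `k ∈ ℤ`:
they lie in the kernel, and the kernel has the universal property of the free group
on this `ℤ`-indexed family. -/
theorem stmt4 :
    ∃ hw : ∀ k : ℤ, v ^ k * u * v ^ (-k) ∈ φ.ker,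
      ∀ (H : Type) [Group H] (g : ℤ → H),
        ∃! ψ : φ.ker →* H, ∀ k : ℤ, ψ ⟨v ^ k * u * v ^ (-k), hw k⟩ = g k := by
  refine ⟨hw, ?_⟩
  intro H _ g
  refine ⟨(FreeGroup.lift g).comp ρ, ?_, ?_⟩
  · intro k
    rw [MonoidHom.comp_apply, ρ_wk k, FreeGroup.lift_apply_of]
  · intro ψ hψ
    ext x
    have hx : θ' (ρ x) = x := by
      ext
      exact θ_ρ x
    have hcomp : (ψ.comp θ' : FreeGroup ℤ →* H) = FreeGroup.lift g := by
      apply FreeGroup.ext_hom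
      intro k
      have hok : θ' (FreeGroup.of k) = ⟨v ^ k * u * v ^ (-k), hw k⟩ := by
        ext; simp [θ']
      simp only [MonoidHom.comp_apply, hok, hψ k, FreeGroup.lift_apply_of]
    calc ψ x = ψ (θ' (ρ x)) := by rw [hx]
    _ = (ψ.comp θ') (ρ x) := rfl
    _ = (FreeGroup.lift g) (ρ x) := by rw [hcomp]
    _ = ((FreeGroup.lift g).comp ρ) x := rfl
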